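/- For the round sphere 𝕊²_s(0) ⊂ ℝ³ of radius s and the function T(x) = sin(ln r) + (u·x)/r on ℝ³ \ B (with r = |x| and u ∈ ℝ³ fixed), the integral (1/(32π m)) ∫_{𝕊²_s} s² η^i (Δ_δ T − Hess_δ T(η,η))² dμ^δ, with η = x/s the unit normal, equals −cos(ln s)/(3m) u^i + O(s^{−1}) as s → ∞. -/

import Mathlib

open MeasureTheory

/-- Second (flat) derivative `Hess_δ f (x)(v,w)` on `ℝ³`. -/
noncomputable def flatHess (f : EuclideanSpace ℝ (Fin 3) → ℝ)
    (x v w : EuclideanSpace ℝ (Fin 3)) : ℝ :=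
  fderiv ℝ (fun y => fderiv ℝ f y v) x w

/-- Flat Laplacian `Δ_δ f (x)` on `ℝ³`. -/
noncomputable def flatLap (f : EuclideanSpace ℝ (Fin 3) → ℝ)
    (x : EuclideanSpace ℝ (Fin 3)) : ℝ :=
  ∑ i : Fin 3, flatHess f x (EuclideanSpace.single i 1) (EuclideanSpace.single i 1)

section Aux
open RealInnerProductSpace

noncomputable abbrev E3 := EuclideanSpace ℝ (Fin 3)

lemma hasFDerivAt_norm' (x : E3) (hx : x ≠ 0) :
    HasFDerivAt (fun y : E3 => ‖y‖) (‖x‖⁻¹ • innerSL ℝ x) x := by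
  have h2 : HasFDerivAt (fun y : E3 => ‖y‖ ^ 2) (2 • innerSL ℝ x) x := by
    simpa using (hasFDerivAt_id x).norm_sq
  have h3 := h2.sqrt (by simpa using pow_ne_zero 2 (norm_ne_zero_iff.2 hx))
  have hfun : (fun y : E3 => Real.sqrt (‖y‖ ^ 2)) = fun y : E3 => ‖y‖ :=
    funext fun y => Real.sqrt_sq (norm_nonneg y)
  rw [hfun] at h3
  refine h3.congr_fderiv ?_
  have h0 : ‖x‖ ≠ 0 := norm_ne_zero_iff.2 hx
  ext v
  simp [Real.sqrt_sq (norm_nonneg x)]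
  field_simp

lemma fderiv_T_apply (u x : E3) (hx : x ≠ 0) (v : E3) :
    fderiv ℝ (fun y : E3 => Real.sin (Real.log ‖y‖) + (inner ℝ u y : ℝ) / ‖y‖) x v =
      Real.cos (Real.log ‖x‖) / ‖x‖ ^ 2 * ⟪v, x⟫ + ⟪u, v⟫ * ‖x‖⁻¹
        - ⟪u, x⟫ / ‖x‖ ^ 3 * ⟪v, x⟫ := by
  have h0 : ‖x‖ ≠ 0 := norm_ne_zero_iff.2 hx
  have hr := hasFDerivAt_norm' x hx
  have hpart1 : HasFDerivAt (fun y : E3 => Real.sin (Real.log ‖y‖))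
      ((Real.cos (Real.log ‖x‖) * ‖x‖⁻¹) • (‖x‖⁻¹ • innerSL ℝ x)) x := by
    exact ((Real.hasDerivAt_sin _).comp _ (Real.hasDerivAt_log h0)).comp_hasFDerivAt x hr
  have hu : HasFDerivAt (fun y : E3 => (inner ℝ u y : ℝ)) (innerSL ℝ u) x :=
    (innerSL ℝ u).hasFDerivAt
  have hinv : HasFDerivAt (fun y : E3 => ‖y‖⁻¹)
      ((-(‖x‖ ^ 2)⁻¹) • (‖x‖⁻¹ • innerSL ℝ x)) x :=
    (hasDerivAt_inv h0).comp_hasFDerivAt x hr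
  have hpart2 := hu.mul hinv
  have H := hpart1.add hpart2
  simp only [div_eq_mul_inv]
  simp only [Pi.add_def, Pi.mul_def] at H
  rw [H.fderiv]
  simp only [ContinuousLinearMap.add_apply, ContinuousLinearMap.smul_apply,
    ContinuousLinearMap.sub_apply, innerSL_apply_apply, smul_eq_mul]
  rw [real_inner_comm x v]
  field_simp
  ring

lemma flatHess_T (u x : E3) (hx : x ≠ 0) (v w : E3) :
    flatHess (fun y : E3 => Real.sin (Real.log ‖y‖) + (inner ℝ u y : ℝ) / ‖y‖) x v w =
      (-(Real.sin (Real.log ‖x‖)) - 2 * Real.cos (Real.log ‖x‖)) * ⟪v, x⟫ * ⟪x, w⟫ / ‖x‖ ^ 4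
        + Real.cos (Real.log ‖x‖) * ⟪v, w⟫ / ‖x‖ ^ 2
        - ⟪u, v⟫ * ⟪x, w⟫ / ‖x‖ ^ 3
        - ⟪u, w⟫ * ⟪v, x⟫ / ‖x‖ ^ 3
        + 3 * ⟪u, x⟫ * ⟪v, x⟫ * ⟪x, w⟫ / ‖x‖ ^ 5
        - ⟪u, x⟫ * ⟪v, w⟫ / ‖x‖ ^ 3 := by
  have h0 : ‖x‖ ≠ 0 := norm_ne_zero_iff.2 hx
  have hr := hasFDerivAt_norm' x hx
  have hev : (fun y : E3 => fderiv ℝ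
      (fun z : E3 => Real.sin (Real.log ‖z‖) + (inner ℝ u z : ℝ) / ‖z‖) y v) =ᶠ[nhds x]
      fun y : E3 => Real.cos (Real.log ‖y‖) * (‖y‖ ^ 2)⁻¹ * ⟪v, y⟫ + ⟪u, v⟫ * ‖y‖⁻¹
        - ⟪u, y⟫ * (‖y‖ ^ 3)⁻¹ * ⟪v, y⟫ := by
    filter_upwards [IsOpen.mem_nhds isOpen_compl_singleton
      (Set.mem_compl_singleton_iff.2 hx)] with y hy
    rw [fderiv_T_apply u y hy v]
    field_simp
  rw [flatHess, Filter.EventuallyEq.fderiv_eq hev]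
  have hv : HasFDerivAt (fun y : E3 => (⟪v, y⟫ : ℝ)) (innerSL ℝ v) x :=
    (innerSL ℝ v).hasFDerivAt
  have hu : HasFDerivAt (fun y : E3 => (⟪u, y⟫ : ℝ)) (innerSL ℝ u) x :=
    (innerSL ℝ u).hasFDerivAt
  have hinv : HasFDerivAt (fun y : E3 => ‖y‖⁻¹)
      ((-(‖x‖ ^ 2)⁻¹) • (‖x‖⁻¹ • innerSL ℝ x)) x :=
    (hasDerivAt_inv h0).comp_hasFDerivAt x hr
  have hA : HasDerivAt (fun t : ℝ => Real.cos (Real.log t) * (t ^ 2)⁻¹)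
      ((-Real.sin (Real.log ‖x‖) * ‖x‖⁻¹) * (‖x‖ ^ 2)⁻¹ +
        Real.cos (Real.log ‖x‖) * (-(↑2 * ‖x‖ ^ 1) / (‖x‖ ^ 2) ^ 2)) ‖x‖ := by
    exact ((Real.hasDerivAt_log h0).cos).mul ((hasDerivAt_pow 2 ‖x‖).inv (pow_ne_zero 2 h0))
  have hA' := (hA.comp_hasFDerivAt x hr).mul hv
  have hB := hinv.const_mul (⟪u, v⟫ : ℝ)
  have hC3 : HasDerivAt (fun t : ℝ => (t ^ 3)⁻¹) (-(↑3 * ‖x‖ ^ 2) / (‖x‖ ^ 3) ^ 2) ‖x‖ :=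
    (hasDerivAt_pow 3 ‖x‖).inv (pow_ne_zero 3 h0)
  have hC := (hu.mul (hC3.comp_hasFDerivAt x hr)).mul hv
  have H := (hA'.add hB).sub hC
  simp only [Function.comp_def, Function.comp_apply, Pi.add_def, Pi.mul_def, Pi.sub_def] at H
  rw [H.fderiv]
  simp only [ContinuousLinearMap.add_apply, ContinuousLinearMap.smul_apply,
    ContinuousLinearMap.sub_apply, innerSL_apply_apply, smul_eq_mul]
  field_simp
  ring

lemma lap_sub_hess (u : E3) (s : ℝ) (hs : 0 < s) (η : E3) (hη : ‖η‖ = 1) :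
    flatLap (fun y : E3 => Real.sin (Real.log ‖y‖) + (inner ℝ u y : ℝ) / ‖y‖) (s • η) -
      flatHess (fun y : E3 => Real.sin (Real.log ‖y‖) + (inner ℝ u y : ℝ) / ‖y‖) (s • η) η η =
      2 * (Real.cos (Real.log s) - ⟪u, η⟫) / s ^ 2 := by
  set x : E3 := s • η with hxdef
  have hη0 : η ≠ 0 := by intro h; rw [h] at hη; simp at hη
  have hx : x ≠ 0 := smul_ne_zero (ne_of_gt hs) hη0
  have hnx : ‖x‖ = s := by rw [hxdef, norm_smul, hη, Real.norm_eq_abs, abs_of_pos hs, mul_one]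
  have hs0 : s ≠ 0 := ne_of_gt hs
  have hηη : (⟪η, η⟫ : ℝ) = 1 := by
    rw [real_inner_self_eq_norm_sq, hη]; norm_num
  have hηx : (⟪η, x⟫ : ℝ) = s := by rw [hxdef, real_inner_smul_right, hηη, mul_one]
  have hxη : (⟪x, η⟫ : ℝ) = s := by rw [hxdef, real_inner_smul_left, hηη, mul_one]
  have hux : (⟪u, x⟫ : ℝ) = s * ⟪u, η⟫ := by rw [hxdef, real_inner_smul_right]
  set L := Real.log s with hL
  set c := Real.cos L
  set si := Real.sin L
  have hsum1 : ∑ i : Fin 3, η i * η i = 1 := by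
    have := real_inner_self_eq_norm_sq η
    simp only [PiLp.inner_apply, RCLike.inner_apply, conj_trivial, hη] at this
    simpa using this
  have hsum2 : ∑ i : Fin 3, u i * η i = ⟪u, η⟫ := by
    simp [PiLp.inner_apply, RCLike.inner_apply, conj_trivial, mul_comm]
  have hlap : flatLap (fun y : E3 => Real.sin (Real.log ‖y‖) + (inner ℝ u y : ℝ) / ‖y‖) x =
      ((-si - 2 * c) / s ^ 2 + 3 * ⟪u, η⟫ / s ^ 2) * (∑ i : Fin 3, η i * η i)
        + (-2 / s ^ 2) * (∑ i : Fin 3, u i * η i)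
        + 3 * (c / s ^ 2 - ⟪u, η⟫ / s ^ 2) := by
    rw [flatLap]
    have hterm : ∀ i : Fin 3,
        flatHess (fun y : E3 => Real.sin (Real.log ‖y‖) + (inner ℝ u y : ℝ) / ‖y‖) x
          (EuclideanSpace.single i 1) (EuclideanSpace.single i 1) =
        ((-si - 2 * c) / s ^ 2 + 3 * ⟪u, η⟫ / s ^ 2) * (η i * η i)
          + (-2 / s ^ 2) * (u i * η i) + (c / s ^ 2 - ⟪u, η⟫ / s ^ 2) := by
      intro i
      rw [flatHess_T u x hx]
      have h1 : (⟪EuclideanSpace.single i (1:ℝ), x⟫ : ℝ) = s * η i := by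
        rw [hxdef, real_inner_smul_right]
        simp [EuclideanSpace.inner_single_left]
      have h2 : (⟪x, EuclideanSpace.single i (1:ℝ)⟫ : ℝ) = s * η i := by
        rw [hxdef, real_inner_smul_left]
        simp [EuclideanSpace.inner_single_right]
      have h3 : (⟪u, EuclideanSpace.single i (1:ℝ)⟫ : ℝ) = u i := by
        simp [EuclideanSpace.inner_single_right]
      have h4 : (⟪EuclideanSpace.single i (1:ℝ), EuclideanSpace.single i (1:ℝ)⟫ : ℝ) = 1 := by
        simp [EuclideanSpace.inner_single_left, EuclideanSpace.single_apply]
      rw [h1, h2, h3, h4, hnx, hux, ← hL]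
      field_simp
      ring
    rw [Finset.sum_congr rfl fun i _ => hterm i]
    rw [Finset.sum_add_distrib, Finset.sum_add_distrib, ← Finset.mul_sum, ← Finset.mul_sum,
      Finset.sum_const]
    simp only [Finset.card_univ, Fintype.card_fin, nsmul_eq_mul]
    ring
  have hhess : flatHess (fun y : E3 => Real.sin (Real.log ‖y‖) + (inner ℝ u y : ℝ) / ‖y‖) x η η =
      (-si - c) / s ^ 2 := by
    rw [flatHess_T u x hx, hηx, hxη, hηη, hux, hnx, ← hL]
    field_simp
    ring
  rw [hlap, hhess, hsum1, hsum2]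
  field_simp
  ring

lemma integral_comp_isometry (μ₁ : Measure E3)
    (hinv : ∀ A : E3 ≃ₗᵢ[ℝ] E3, μ₁.map A = μ₁)
    (A : E3 ≃ₗᵢ[ℝ] E3) (f : E3 → ℝ) : ∫ η, f (A η) ∂μ₁ = ∫ η, f η ∂μ₁ := by
  conv_rhs => rw [← hinv A]
  rw [show (μ₁.map A) = μ₁.map A.toHomeomorph.toMeasurableEquiv from rfl]
  rw [MeasureTheory.integral_map_equiv]
  rfl

noncomputable def flipIso (j : Fin 3) : E3 ≃ₗᵢ[ℝ] E3 :=
  LinearIsometryEquiv.piLpCongrRight 2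
    (fun k => if k = j then LinearIsometryEquiv.neg ℝ else LinearIsometryEquiv.refl ℝ ℝ)

lemma flipIso_apply (j : Fin 3) (η : E3) (k : Fin 3) :
    flipIso j η k = if k = j then -η k else η k := by
  simp only [flipIso, LinearIsometryEquiv.piLpCongrRight_apply]
  by_cases h : k = j
  · rw [if_pos h, if_pos h]; rfl
  · rw [if_neg h, if_neg h]; rfl

noncomputable def swapIso (i j : Fin 3) : E3 ≃ₗᵢ[ℝ] E3 :=
  LinearIsometryEquiv.piLpCongrLeft 2 ℝ ℝ (Equiv.swap i j)

lemma swapIso_apply (i j : Fin 3) (η : E3) (k : Fin 3) :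
    swapIso i j η k = η (Equiv.swap i j k) := by
  simp [swapIso, LinearIsometryEquiv.piLpCongrLeft_apply, Equiv.piCongrLeft']

lemma coord_abs_le (η : E3) (i : Fin 3) : |η i| ≤ ‖η‖ := by
  have h := abs_real_inner_le_norm (EuclideanSpace.single i (1:ℝ)) η
  have h1 : (⟪EuclideanSpace.single i (1:ℝ), η⟫ : ℝ) = η i := by
    simp [EuclideanSpace.inner_single_left]
  rw [h1] at h
  simpa [EuclideanSpace.norm_single] using h

section Moments

variable (μ₁ : Measure E3)
variable (hsupp : μ₁ (Metric.sphere (0 : E3) 1)ᶜ = 0)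
variable (hinv : ∀ A : E3 ≃ₗᵢ[ℝ] E3, μ₁.map A = μ₁)
variable (htot : μ₁ Set.univ = ENNReal.ofReal (4 * Real.pi))

include hsupp in
lemma ae_norm_one : ∀ᵐ η ∂μ₁, ‖η‖ = 1 := by
  have h : ∀ᵐ η ∂μ₁, η ∈ Metric.sphere (0 : E3) 1 := by
    rw [MeasureTheory.ae_iff]
    exact hsupp
  filter_upwards [h] with η hη
  simpa [mem_sphere_iff_norm] using hη

include hsupp htot in
lemma integrable_bdd (f : E3 → ℝ) (hf : Continuous f) (M : ℝ)
    (hM : ∀ η : E3, ‖η‖ = 1 → |f η| ≤ M) : Integrable f μ₁ := by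
  haveI : IsFiniteMeasure μ₁ := ⟨by rw [htot]; exact ENNReal.ofReal_lt_top⟩
  refine ⟨hf.aestronglyMeasurable, HasFiniteIntegral.of_bounded (C := M) ?_⟩
  filter_upwards [ae_norm_one μ₁ hsupp] with η hη
  simpa [Real.norm_eq_abs] using hM η hη

include hinv in
lemma mom_odd (f : E3 → ℝ) (hodd : ∀ η, f (-η) = - f η) : ∫ η, f η ∂μ₁ = 0 := by
  have h := integral_comp_isometry μ₁ hinv (LinearIsometryEquiv.neg ℝ) f
  have h2 : (fun η : E3 => f ((LinearIsometryEquiv.neg ℝ) η)) = fun η : E3 => - f η :=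
    funext fun η => by rw [show ((LinearIsometryEquiv.neg ℝ) η) = -η from rfl, hodd]
  rw [h2, integral_neg] at h
  linarith

include hinv in
lemma mom1 (i : Fin 3) : ∫ η, η i ∂μ₁ = 0 := by
  refine mom_odd μ₁ hinv _ fun η => ?_
  rfl

include hinv in
lemma mom2_off (i j : Fin 3) (hij : i ≠ j) : ∫ η, η i * η j ∂μ₁ = 0 := by
  have h := integral_comp_isometry μ₁ hinv (flipIso j) (fun η => η i * η j)
  have h2 : (fun η : E3 => flipIso j η i * flipIso j η j) =
      fun η : E3 => -(η i * η j) := by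
    funext η
    rw [flipIso_apply, flipIso_apply, if_neg hij, if_pos rfl]
    ring
  rw [show (fun η : E3 => (fun η : E3 => η i * η j) (flipIso j η)) =
      fun η : E3 => -(η i * η j) from h2] at h
  rw [integral_neg] at h
  linarith

include hinv in
lemma mom2_diag (i j : Fin 3) : ∫ η, η i * η i ∂μ₁ = ∫ η, η j * η j ∂μ₁ := by
  have h := integral_comp_isometry μ₁ hinv (swapIso j i) (fun η => η j * η j)
  have h2 : (fun η : E3 => (fun η : E3 => η j * η j) (swapIso j i η)) =
      fun η : E3 => η i * η i := by
    funext η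
    show (swapIso j i η) j * (swapIso j i η) j = η i * η i
    rw [swapIso_apply, Equiv.swap_apply_left]
  rw [h2] at h
  exact h

include hsupp hinv htot in
lemma mom2_diag_val (i : Fin 3) : ∫ η, η i * η i ∂μ₁ = 4 * Real.pi / 3 := by
  have hint : ∀ j : Fin 3, Integrable (fun η : E3 => η j * η j) μ₁ := by
    intro j
    refine integrable_bdd μ₁ hsupp htot _
      ((EuclideanSpace.proj j).continuous.mul (EuclideanSpace.proj j).continuous) 1
      fun η hη => ?_
    have := coord_abs_le η j
    rw [hη] at this
    calc |η j * η j| = |η j| * |η j| := abs_mul _ _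
      _ ≤ 1 * 1 := by nlinarith [abs_nonneg (η j)]
      _ = 1 := by norm_num
  have hsum : ∑ j : Fin 3, ∫ η, η j * η j ∂μ₁ = 4 * Real.pi := by
    rw [← integral_finset_sum _ fun j _ => hint j]
    have hcong : (fun η : E3 => ∑ j : Fin 3, η j * η j) =ᵐ[μ₁] fun _ => (1 : ℝ) := by
      filter_upwards [ae_norm_one μ₁ hsupp] with η hη
      have := real_inner_self_eq_norm_sq η
      simp only [PiLp.inner_apply, RCLike.inner_apply, conj_trivial, hη] at this
      simpa using this
    rw [integral_congr_ae hcong, integral_const]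
    simp only [smul_eq_mul, mul_one]
    rw [measureReal_def, htot, ENNReal.toReal_ofReal (by positivity)]
  have hall : ∀ j : Fin 3, ∫ η, η j * η j ∂μ₁ = ∫ η, η i * η i ∂μ₁ :=
    fun j => mom2_diag μ₁ hinv j i
  rw [Fin.sum_univ_three] at hsum
  rw [hall 0, hall 1, hall 2] at hsum
  linarith

include hsupp hinv htot in
lemma mom_ui (u : E3) (i : Fin 3) :
    ∫ η, η i * (⟪u, η⟫ : ℝ) ∂μ₁ = 4 * Real.pi / 3 * u i := by
  have hint : ∀ j : Fin 3, Integrable (fun η : E3 => u j * (η i * η j)) μ₁ := by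
    intro j
    refine integrable_bdd μ₁ hsupp htot _
      (continuous_const.mul ((EuclideanSpace.proj i).continuous.mul
        (EuclideanSpace.proj j).continuous)) |u j| fun η hη => ?_
    have hi := coord_abs_le η i; have hj := coord_abs_le η j
    rw [hη] at hi hj
    calc |u j * (η i * η j)| = |u j| * (|η i| * |η j|) := by
          rw [abs_mul, abs_mul]
      _ ≤ |u j| * (1 * 1) := by
          apply mul_le_mul_of_nonneg_left _ (abs_nonneg _)
          nlinarith [abs_nonneg (η i), abs_nonneg (η j)]
      _ = |u j| := by norm_num
  have hfe : (fun η : E3 => η i * (⟪u, η⟫ : ℝ)) =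
      fun η : E3 => ∑ j : Fin 3, u j * (η i * η j) := by
    funext η
    rw [show (⟪u, η⟫ : ℝ) = ∑ j : Fin 3, u j * η j by
      simp [PiLp.inner_apply, RCLike.inner_apply, conj_trivial, mul_comm]]
    rw [Finset.mul_sum]
    exact Finset.sum_congr rfl fun j _ => by ring
  rw [hfe, integral_finset_sum _ fun j _ => hint j]
  have hterm : ∀ j : Fin 3, ∫ η, u j * (η i * η j) ∂μ₁ =
      u j * ∫ η, η i * η j ∂μ₁ := fun j => integral_const_mul _ _
  rw [Finset.sum_congr rfl fun j _ => hterm j]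
  rw [Finset.sum_eq_single i]
  · rw [mom2_diag_val μ₁ hsupp hinv htot i]
    ring
  · intro j _ hji
    rw [mom2_off μ₁ hinv i j (Ne.symm hji), mul_zero]
  · intro h
    exact absurd (Finset.mem_univ i) h

include hinv in
lemma mom3 (u : E3) (i : Fin 3) : ∫ η, η i * (⟪u, η⟫ : ℝ) ^ 2 ∂μ₁ = 0 := by
  refine mom_odd μ₁ hinv _ fun η => ?_
  have h1 : ((-η : E3) i) = -(η i) := rfl
  rw [show (⟪u, (-η : E3)⟫ : ℝ) = -(⟪u, η⟫ : ℝ) from inner_neg_right u η, h1]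
  ring

end Moments
end Aux

/-- For the round sphere `𝕊²_s(0) ⊂ ℝ³` of radius `s` (whose surface
measure is, under `x = sη`, the measure `s² μ₁` with `μ₁` the rotation-invariant surface
measure of total mass `4π` on the unit sphere) and `T(x) = sin(ln r) + (u·x)/r`
(`r = |x|`), the integral
`(1/(32π m)) ∫_{𝕊²_s} s² ηⁱ (Δ_δT − Hess_δT(η,η))² dμ^δ
  = (1/(32π m)) ∫_{unit sphere} s⁴ ηⁱ (Δ_δT(sη) − Hess_δT(sη)(η,η))² dμ₁`
equals `−cos(ln s)/(3m) uⁱ + O(s^{−1})` as `s → ∞`. -/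
theorem correction_term_asymptotics (m : ℝ) (hm : m ≠ 0)
    (u : EuclideanSpace ℝ (Fin 3))
    (μ₁ : Measure (EuclideanSpace ℝ (Fin 3)))
    (hsupp : μ₁ (Metric.sphere (0 : EuclideanSpace ℝ (Fin 3)) 1)ᶜ = 0)
    (hinv : ∀ A : EuclideanSpace ℝ (Fin 3) ≃ₗᵢ[ℝ] EuclideanSpace ℝ (Fin 3),
      μ₁.map A = μ₁)
    (htot : μ₁ Set.univ = ENNReal.ofReal (4 * Real.pi)) :
    ∃ C s₀ : ℝ, 0 < C ∧ 0 < s₀ ∧ ∀ s ≥ s₀, ∀ i : Fin 3,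
      |(1 / (32 * Real.pi * m)) *
          (∫ η, s ^ 4 * η i *
            (flatLap (fun x => Real.sin (Real.log ‖x‖) + (inner ℝ u x : ℝ) / ‖x‖)
                (s • η) -
              flatHess (fun x => Real.sin (Real.log ‖x‖) + (inner ℝ u x : ℝ) / ‖x‖)
                (s • η) η η) ^ 2 ∂μ₁) -
        (-(Real.cos (Real.log s) / (3 * m)) * u i)| ≤ C / s := by
  refine ⟨1, 1, one_pos, one_pos, fun s hs i => ?_⟩
  have hs0 : (0 : ℝ) < s := lt_of_lt_of_le one_pos hs
  set c := Real.cos (Real.log s) with hc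
  -- integrand simplification
  have hkey : ∫ η, s ^ 4 * η i *
      (flatLap (fun x => Real.sin (Real.log ‖x‖) + (inner ℝ u x : ℝ) / ‖x‖) (s • η) -
        flatHess (fun x => Real.sin (Real.log ‖x‖) + (inner ℝ u x : ℝ) / ‖x‖) (s • η) η η) ^ 2
      ∂μ₁ =
      ∫ η, (4 * c ^ 2 * η i - 8 * c * (η i * (inner ℝ u η : ℝ))
        + 4 * (η i * (inner ℝ u η : ℝ) ^ 2)) ∂μ₁ := by
    refine integral_congr_ae ?_
    filter_upwards [ae_norm_one μ₁ hsupp] with η hη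
    rw [lap_sub_hess u s hs0 η hη, ← hc]
    have hs' : s ≠ 0 := ne_of_gt hs0
    field_simp
    ring
  have hint1 : Integrable (fun η : EuclideanSpace ℝ (Fin 3) => 4 * c ^ 2 * η i) μ₁ := by
    refine integrable_bdd μ₁ hsupp htot _
      (continuous_const.mul (EuclideanSpace.proj i).continuous) (4 * c ^ 2) fun η hη => ?_
    have := coord_abs_le η i
    rw [hη] at this
    calc |4 * c ^ 2 * η i| = 4 * c ^ 2 * |η i| := by
          rw [abs_mul, abs_of_nonneg (by positivity : (0:ℝ) ≤ 4 * c ^ 2)]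
      _ ≤ 4 * c ^ 2 * 1 := by
          apply mul_le_mul_of_nonneg_left this (by positivity)
      _ = 4 * c ^ 2 := by ring
  have hcontinner : Continuous (fun η : EuclideanSpace ℝ (Fin 3) => (inner ℝ u η : ℝ)) :=
    Continuous.inner continuous_const continuous_id
  have hint2 : Integrable
      (fun η : EuclideanSpace ℝ (Fin 3) => 8 * c * (η i * (inner ℝ u η : ℝ))) μ₁ := by
    refine integrable_bdd μ₁ hsupp htot _
      (by exact (continuous_const.mul (((EuclideanSpace.proj i).continuous).mul hcontinner)))
      (8 * |c| * ‖u‖) fun η hη => ?_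
    have h1 := coord_abs_le η i
    rw [hη] at h1
    have h2 : |(inner ℝ u η : ℝ)| ≤ ‖u‖ := by
      have := abs_real_inner_le_norm u η
      rwa [hη, mul_one] at this
    calc |8 * c * (η i * (inner ℝ u η : ℝ))|
        = 8 * |c| * (|η i| * |(inner ℝ u η : ℝ)|) := by
          rw [abs_mul, abs_mul, abs_mul]; norm_num
      _ ≤ 8 * |c| * (1 * ‖u‖) := by
          apply mul_le_mul_of_nonneg_left _ (by positivity)
          exact mul_le_mul h1 h2 (abs_nonneg _) zero_le_one
      _ = 8 * |c| * ‖u‖ := by ring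
  have hint3 : Integrable
      (fun η : EuclideanSpace ℝ (Fin 3) => 4 * (η i * (inner ℝ u η : ℝ) ^ 2)) μ₁ := by
    refine integrable_bdd μ₁ hsupp htot _
      (by exact continuous_const.mul (((EuclideanSpace.proj i).continuous).mul
        (hcontinner.pow 2))) (4 * ‖u‖ ^ 2) fun η hη => ?_
    have h1 := coord_abs_le η i
    rw [hη] at h1
    have h2 : |(inner ℝ u η : ℝ)| ≤ ‖u‖ := by
      have := abs_real_inner_le_norm u η
      rwa [hη, mul_one] at this
    calc |4 * (η i * (inner ℝ u η : ℝ) ^ 2)|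
        = 4 * (|η i| * |(inner ℝ u η : ℝ)| ^ 2) := by
          rw [abs_mul, abs_mul, abs_pow]; norm_num
      _ ≤ 4 * (1 * ‖u‖ ^ 2) := by
          apply mul_le_mul_of_nonneg_left _ (by norm_num)
          exact mul_le_mul h1 (pow_le_pow_left₀ (abs_nonneg _) h2 2)
            (by positivity) zero_le_one
      _ = 4 * ‖u‖ ^ 2 := by ring
  have hval : ∫ η, (4 * c ^ 2 * η i - 8 * c * (η i * (inner ℝ u η : ℝ))
      + 4 * (η i * (inner ℝ u η : ℝ) ^ 2)) ∂μ₁ = -(32 * Real.pi / 3) * c * u i := by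
    have hint12 : Integrable (fun η : EuclideanSpace ℝ (Fin 3) =>
        4 * c ^ 2 * η i - 8 * c * (η i * (inner ℝ u η : ℝ))) μ₁ := hint1.sub hint2
    rw [integral_add hint12 hint3, integral_sub hint1 hint2]
    have e1 : ∫ η, 4 * c ^ 2 * η i ∂μ₁ = 4 * c ^ 2 * ∫ η, η i ∂μ₁ :=
      integral_const_mul _ _
    have e2 : ∫ η, 8 * c * (η i * (inner ℝ u η : ℝ)) ∂μ₁ =
        8 * c * ∫ η, η i * (inner ℝ u η : ℝ) ∂μ₁ := integral_const_mul _ _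
    have e3 : ∫ η, 4 * (η i * (inner ℝ u η : ℝ) ^ 2) ∂μ₁ =
        4 * ∫ η, η i * (inner ℝ u η : ℝ) ^ 2 ∂μ₁ := integral_const_mul _ _
    rw [e1, e2, e3, mom1 μ₁ hinv i, mom_ui μ₁ hsupp hinv htot u i, mom3 μ₁ hinv u i]
    ring
  rw [hkey, hval]
  have hπ : Real.pi ≠ 0 := Real.pi_ne_zero
  have : (1 / (32 * Real.pi * m)) * (-(32 * Real.pi / 3) * c * u i) -
      (-(c / (3 * m)) * u i) = 0 := by
    field_simp
    ring
  rw [this, abs_zero]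
  positivity
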